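/- On the open cone {(δ, β, ζ) ∈ ℝ³ : δ > 0 and δ² − β² − ζ² > 0}, the stochastic Hamiltonian of the Poincaré plane, 𝓗(δ, β, ζ) = √(δ² − β² − ζ²) + (1/2) log(δ² − β² − ζ²) − log π, satisfies the Legendre/Euler identity 𝓗 − δ ∂𝓗/∂δ − β ∂𝓗/∂β − ζ ∂𝓗/∂ζ = (1/2)( log((δ² − β² − ζ²)/π²) − 2 ), so that the Shannon information of the Gibbs state equals 𝓘 = (1/2)(log((δ² − β² − ζ²)/π²) − 2). -/

import Mathlib

/-- The stochastic Hamiltonian of the Poincaré plane in the generalized temperatures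
`(δ, β, ζ)`: `𝓗 = √(δ²−β²−ζ²) + ½ log(δ²−β²−ζ²) − log π`. -/
noncomputable def Hsto (d b z : ℝ) : ℝ :=
  Real.sqrt (d^2 - b^2 - z^2) + (1/2) * Real.log (d^2 - b^2 - z^2) - Real.log Real.pi

lemma deriv_aux (a c t : ℝ) (h : 0 < a * t^2 + c) :
    deriv (fun s => Real.sqrt (a * s^2 + c) + (1/2) * Real.log (a * s^2 + c)
        - Real.log Real.pi) t
      = a * t / Real.sqrt (a * t^2 + c) + a * t / (a * t^2 + c) := by
  have hne : a * t^2 + c ≠ 0 := ne_of_gt h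
  have h1 : HasDerivAt (fun s : ℝ => a * s^2 + c) (2 * a * t) t := by
    have := ((hasDerivAt_pow 2 t).const_mul a).add_const c
    simpa [mul_comm, mul_assoc, mul_left_comm] using this
  have h2 := (h1.sqrt hne).add (h1.log hne |>.const_mul (1/2))
  have h3 := h2.sub_const (Real.log Real.pi)
  rw [show deriv (fun s => Real.sqrt (a * s^2 + c) + (1/2) * Real.log (a * s^2 + c)
      - Real.log Real.pi) t = _ from h3.deriv]
  have hs : Real.sqrt (a * t^2 + c) ≠ 0 := Real.sqrt_ne_zero'.mpr h
  field_simp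
/-- On the cone `δ > 0`, `δ² − β² − ζ² > 0`, the stochastic Hamiltonian of the Poincaré plane
satisfies the Legendre/Euler identity
`𝓗 − δ ∂𝓗/∂δ − β ∂𝓗/∂β − ζ ∂𝓗/∂ζ = ½(log((δ²−β²−ζ²)/π²) − 2)`, so that the Shannon
information of the Gibbs state equals `𝓘 = ½(log((δ²−β²−ζ²)/π²) − 2)`. -/
theorem stmt_9 (d b z : ℝ) (hd : 0 < d) (hcone : 0 < d^2 - b^2 - z^2) :
    Hsto d b z - d * deriv (fun t => Hsto t b z) d - b * deriv (fun t => Hsto d t z) b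
        - z * deriv (fun t => Hsto d b t) z
      = (1/2) * (Real.log ((d^2 - b^2 - z^2) / Real.pi^2) - 2) := by
  have e1 : deriv (fun t => Hsto t b z) d
      = d / Real.sqrt (d^2 - b^2 - z^2) + d / (d^2 - b^2 - z^2) := by
    have heq : (fun t => Hsto t b z)
        = (fun s => Real.sqrt (1 * s^2 + (-b^2 - z^2))
            + (1/2) * Real.log (1 * s^2 + (-b^2 - z^2)) - Real.log Real.pi) := by
      funext s; simp only [Hsto]; ring_nf
    rw [heq, deriv_aux 1 (-b^2 - z^2) d (by linarith)]
    have : 1 * d^2 + (-b^2 - z^2) = d^2 - b^2 - z^2 := by ring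
    rw [this]; ring
  have e2 : deriv (fun t => Hsto d t z) b
      = -b / Real.sqrt (d^2 - b^2 - z^2) + -b / (d^2 - b^2 - z^2) := by
    have heq : (fun t => Hsto d t z)
        = (fun s => Real.sqrt ((-1) * s^2 + (d^2 - z^2))
            + (1/2) * Real.log ((-1) * s^2 + (d^2 - z^2)) - Real.log Real.pi) := by
      funext s; simp only [Hsto]; ring_nf
    rw [heq, deriv_aux (-1) (d^2 - z^2) b (by linarith)]
    have : (-1 : ℝ) * b^2 + (d^2 - z^2) = d^2 - b^2 - z^2 := by ring
    rw [this]; ring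
  have e3 : deriv (fun t => Hsto d b t) z
      = -z / Real.sqrt (d^2 - b^2 - z^2) + -z / (d^2 - b^2 - z^2) := by
    have heq : (fun t => Hsto d b t)
        = (fun s => Real.sqrt ((-1) * s^2 + (d^2 - b^2))
            + (1/2) * Real.log ((-1) * s^2 + (d^2 - b^2)) - Real.log Real.pi) := by
      funext s; simp only [Hsto]; ring_nf
    rw [heq, deriv_aux (-1) (d^2 - b^2) z (by linarith)]
    have : (-1 : ℝ) * z^2 + (d^2 - b^2) = d^2 - b^2 - z^2 := by ring
    rw [this]; ring
  rw [Hsto, e1, e2, e3]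
  rw [Real.log_div (ne_of_gt hcone) (pow_ne_zero 2 Real.pi_ne_zero), Real.log_pow]
  set S := Real.sqrt (d^2 - b^2 - z^2) with hS
  have hsq : S^2 = d^2 - b^2 - z^2 := Real.sq_sqrt hcone.le
  have hsne : S ≠ 0 := by rw [hS]; exact Real.sqrt_ne_zero'.mpr hcone
  have key : d * (d / S + d / (d^2 - b^2 - z^2))
      + b * (-b / S + -b / (d^2 - b^2 - z^2))
      + z * (-z / S + -z / (d^2 - b^2 - z^2)) = S + 1 := by
    field_simp; linear_combination (-(d^2 - b^2 - z^2)) * hsq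
  push_cast
  linarith [key]
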